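/- For every multi-index β, there exists a polynomial P of degree 2|β|+1 and a constant C (depending on β, μ̃, and the C^{|β|+1} norm of ∇φ) such that |Z^β K(s,y,z)| ≤ C P(z/√s) e^{−z²/(4 μ̃ |N(y)|² s)} s^{−1} for all s > 0, z > 0, y ∈ ℝ², where K(s,y,z) = μ̃|N|² (4π μ̃ |N|² s)^{−1/2} ∂_z( e^{−z²/(4 μ̃ |N|² s)} ) and Z^β = ∂_{y¹}^{β₁}∂_{y²}^{β₂}((z/(1+z))∂_z)^{β₃}. -/

import Mathlib

open MeasureTheory Real

/-- Partial derivative in the `i`-th coordinate direction in `ℝ²`. -/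
noncomputable def pd2 (i : Fin 2) (f : (Fin 2 → ℝ) → ℝ) (y : Fin 2 → ℝ) : ℝ :=
  fderiv ℝ f y (Pi.single i 1)

/-- The vector field `N(y) = (∂₁φ(y), ∂₂φ(y), −1)`. -/
noncomputable def Nphi (φ : (Fin 2 → ℝ) → ℝ) (y : Fin 2 → ℝ) : Fin 3 → ℝ :=
  ![pd2 0 φ y, pd2 1 φ y, (-1 : ℝ)]

/-- `|N(y)|²`, the squared Euclidean norm of the vector field `N`. -/
noncomputable def nsq (N : (Fin 2 → ℝ) → (Fin 3 → ℝ)) (y : Fin 2 → ℝ) : ℝ :=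
  ∑ i, (N y i) ^ 2

/-- The kernel `K(s,y,z) = μ̃|N|² (4π μ̃ |N|² s)^{−1/2} ∂_z( e^{−z²/(4 μ̃ |N|² s)} )`. -/
noncomputable def Khk (μ : ℝ) (N : (Fin 2 → ℝ) → (Fin 3 → ℝ)) (s : ℝ)
    (y : Fin 2 → ℝ) (z : ℝ) : ℝ :=
  μ * nsq N y * (4 * Real.pi * μ * nsq N y * s) ^ (-(1 : ℝ) / 2) *
    deriv (fun w => Real.exp (-(w ^ 2) / (4 * μ * nsq N y * s))) z

/-- Tangential derivative `∂_{yⁱ}` of a function of `(y,z)`. -/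
noncomputable def Dy (i : Fin 2) (g : (Fin 2 → ℝ) → ℝ → ℝ) : (Fin 2 → ℝ) → ℝ → ℝ :=
  fun y z => fderiv ℝ (fun y' => g y' z) y (Pi.single i 1)

/-- The conormal vector field `Z₃ = (z/(1+z)) ∂_z`. -/
noncomputable def Z3op (g : (Fin 2 → ℝ) → ℝ → ℝ) : (Fin 2 → ℝ) → ℝ → ℝ :=
  fun y z => (z / (1 + z)) * deriv (g y) z

/-- `Z^β = ∂_{y¹}^{β₁} ∂_{y²}^{β₂} ((z/(1+z))∂_z)^{β₃}`. -/
noncomputable def Zbeta (β : ℕ × ℕ × ℕ) (g : (Fin 2 → ℝ) → ℝ → ℝ) :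
    (Fin 2 → ℝ) → ℝ → ℝ :=
  (Dy 0)^[β.1] ((Dy 1)^[β.2.1] (Z3op^[β.2.2] g))

set_option maxHeartbeats 1000000

namespace Stmt7Aux

/-! ### Coefficient class -/

/-- Coefficient class: `C^m` with all derivatives up to order `m` uniformly bounded. -/
def Coef (m : ℕ) (c : (Fin 2 → ℝ) → ℝ) : Prop :=
  ContDiff ℝ (m : ℕ) c ∧ ∃ M, ∀ k ≤ m, ∀ y, ‖iteratedFDeriv ℝ k c y‖ ≤ M

theorem Coef.of_le {m k : ℕ} {c} (h : Coef m c) (hk : k ≤ m) : Coef k c := by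
  obtain ⟨h1, M, h2⟩ := h
  exact ⟨h1.of_le (by exact_mod_cast Nat.cast_le.2 hk), M, fun j hj y => h2 j (hj.trans hk) y⟩

theorem Coef.const (m : ℕ) (A : ℝ) : Coef m (fun _ => A) := by
  refine ⟨contDiff_const, |A|, fun k hk y => ?_⟩
  cases k with
  | zero => simp [norm_iteratedFDeriv_zero]
  | succ n => rw [iteratedFDeriv_const_of_ne (by simp)]; simp [abs_nonneg]

theorem Coef.contDiff {m : ℕ} {c} (h : Coef m c) : ContDiff ℝ (m : ℕ) c := h.1

theorem Coef.differentiable {m : ℕ} {c} (h : Coef (m + 1) c) : Differentiable ℝ c :=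
  h.1.differentiable (by simp)

theorem Coef.bound {m : ℕ} {c} (h : Coef m c) :
    ∃ M, 0 ≤ M ∧ ∀ k ≤ m, ∀ y, ‖iteratedFDeriv ℝ k c y‖ ≤ M := by
  obtain ⟨_, M, h2⟩ := h
  exact ⟨M, le_trans (norm_nonneg _) (h2 0 (Nat.zero_le _) 0), h2⟩

theorem Coef.abs_le {m : ℕ} {c} (h : Coef m c) : ∃ M, 0 ≤ M ∧ ∀ y, |c y| ≤ M := by
  obtain ⟨M, hM0, h2⟩ := h.bound
  exact ⟨M, hM0, fun y => by simpa [norm_iteratedFDeriv_zero] using h2 0 (Nat.zero_le _) y⟩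

theorem Coef.add {m : ℕ} {c₁ c₂} (h₁ : Coef m c₁) (h₂ : Coef m c₂) :
    Coef m (fun y => c₁ y + c₂ y) := by
  obtain ⟨hc₁, M₁, hM₁⟩ := h₁
  obtain ⟨hc₂, M₂, hM₂⟩ := h₂
  refine ⟨hc₁.add hc₂, M₁ + M₂, fun k hk y => ?_⟩
  have : (fun y => c₁ y + c₂ y) = c₁ + c₂ := rfl
  rw [this, iteratedFDeriv_add_apply (hc₁.of_le (by exact_mod_cast hk)).contDiffAt
    (hc₂.of_le (by exact_mod_cast hk)).contDiffAt]
  exact (norm_add_le _ _).trans (add_le_add (hM₁ k hk y) (hM₂ k hk y))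

theorem Coef.mul {m : ℕ} {c₁ c₂} (h₁ : Coef m c₁) (h₂ : Coef m c₂) :
    Coef m (fun y => c₁ y * c₂ y) := by
  obtain ⟨hc₁, M₁, hM₁'⟩ := h₁
  obtain ⟨hc₂, M₂, hM₂'⟩ := h₂
  obtain ⟨N₁, hN₁0, hN₁⟩ := Coef.bound ⟨hc₁, M₁, hM₁'⟩
  obtain ⟨N₂, hN₂0, hN₂⟩ := Coef.bound ⟨hc₂, M₂, hM₂'⟩
  refine ⟨hc₁.mul hc₂, 2 ^ m * (N₁ * N₂), fun k hk y => ?_⟩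
  calc ‖iteratedFDeriv ℝ k (fun y => c₁ y * c₂ y) y‖
      ≤ ∑ i ∈ Finset.range (k + 1), (k.choose i : ℝ) * ‖iteratedFDeriv ℝ i c₁ y‖ *
          ‖iteratedFDeriv ℝ (k - i) c₂ y‖ :=
        norm_iteratedFDeriv_mul_le hc₁ hc₂ y (by exact_mod_cast hk)
    _ ≤ ∑ i ∈ Finset.range (k + 1), (k.choose i : ℝ) * (N₁ * N₂) := by
        refine Finset.sum_le_sum fun i hi => ?_
        rw [mul_assoc]
        refine mul_le_mul_of_nonneg_left ?_ (by positivity)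
        exact mul_le_mul (hN₁ i (le_trans (Nat.lt_succ_iff.1 (Finset.mem_range.1 hi)) hk) y)
          (hN₂ _ (le_trans (Nat.sub_le _ _) hk) y) (norm_nonneg _) hN₁0
    _ = (2 ^ k : ℝ) * (N₁ * N₂) := by
        rw [← Finset.sum_mul]
        congr 1
        exact_mod_cast Nat.sum_range_choose k
    _ ≤ 2 ^ m * (N₁ * N₂) := by
        refine mul_le_mul_of_nonneg_right ?_ (by positivity)
        exact pow_le_pow_right₀ one_le_two hk

theorem Coef.smul {m : ℕ} {c} (A : ℝ) (h : Coef m c) : Coef m (fun y => A * c y) :=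
  (Coef.const m A).mul h

theorem Coef.pd {m : ℕ} {c} (i : Fin 2) (h : Coef (m + 1) c) :
    Coef m (fun y => fderiv ℝ c y (Pi.single i 1)) := by
  obtain ⟨hc, M, hM⟩ := h
  have hfd : ContDiff ℝ (m : ℕ) (fderiv ℝ c) :=
    hc.fderiv_right (by exact_mod_cast le_refl (m + 1 : ℕ))
  refine ⟨hfd.clm_apply contDiff_const, M, fun k hk y => ?_⟩
  calc ‖iteratedFDeriv ℝ k (fun y => fderiv ℝ c y (Pi.single i 1)) y‖
      ≤ ‖(Pi.single i 1 : Fin 2 → ℝ)‖ * ‖iteratedFDeriv ℝ k (fderiv ℝ c) y‖ :=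
        norm_iteratedFDeriv_clm_apply_const hfd.contDiffAt (by exact_mod_cast hk)
    _ = ‖iteratedFDeriv ℝ (k + 1) c y‖ := by
        rw [norm_iteratedFDeriv_fderiv, Pi.norm_single, norm_one, one_mul]
    _ ≤ M := hM (k + 1) (Nat.succ_le_succ hk) y

/-! ### The basic terms -/

noncomputable def Tm (μ : ℝ) (a c : (Fin 2 → ℝ) → ℝ) (e : ℝ) (p r q : ℕ) :
    ℝ → (Fin 2 → ℝ) → ℝ → ℝ :=
  fun s y z => c y * a y ^ e * z ^ p * ((1 + z) ^ r)⁻¹ * (Real.sqrt s ^ q)⁻¹ *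
    Real.exp (-(z ^ 2) / (4 * μ * a y * s))

theorem Tm_hasDerivAt (μ : ℝ) (a c : (Fin 2 → ℝ) → ℝ) (e : ℝ) (p r q : ℕ)
    {s : ℝ} (y : Fin 2 → ℝ) {z : ℝ} (hz : 0 < z) :
    HasDerivAt (Tm μ a c e p r q s y)
      ((((c y * a y ^ e * ((p : ℝ) * z ^ (p - 1))) * ((1 + z) ^ r)⁻¹ +
          c y * a y ^ e * z ^ p * (-((r : ℝ) * (1 + z) ^ (r - 1) * 1) / ((1 + z) ^ r) ^ 2)) *
            (Real.sqrt s ^ q)⁻¹) * Real.exp (-(z ^ 2) / (4 * μ * a y * s)) +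
        c y * a y ^ e * z ^ p * ((1 + z) ^ r)⁻¹ * (Real.sqrt s ^ q)⁻¹ *
          (Real.exp (-(z ^ 2) / (4 * μ * a y * s)) * (-(2 * z) / (4 * μ * a y * s)))) z := by
  have hw : (0:ℝ) < 1 + z := by linarith
  have hexp : HasDerivAt (fun w : ℝ => Real.exp (-(w ^ 2) / (4 * μ * a y * s)))
      (Real.exp (-(z ^ 2) / (4 * μ * a y * s)) * (-(2 * z) / (4 * μ * a y * s))) z := by
    have h1 : HasDerivAt (fun w : ℝ => -(w ^ 2) / (4 * μ * a y * s))
        (-(2 * z) / (4 * μ * a y * s)) z := by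
      have h := ((hasDerivAt_pow 2 z).neg.div_const (4 * μ * a y * s))
      norm_num at h
      exact h
    exact h1.exp
  have h1 : HasDerivAt (fun w : ℝ => (1 + w)) 1 z := by
    simpa using (hasDerivAt_id z).const_add (1:ℝ)
  have hinv : HasDerivAt (fun w : ℝ => ((1 + w) ^ r)⁻¹)
      (-((r : ℝ) * (1 + z) ^ (r - 1) * 1) / ((1 + z) ^ r) ^ 2) z :=
    (h1.pow r).inv (pow_ne_zero _ hw.ne')
  have hp : HasDerivAt (fun w : ℝ => c y * a y ^ e * w ^ p)
      (c y * a y ^ e * ((p : ℝ) * z ^ (p - 1))) z := (hasDerivAt_pow p z).const_mul _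
  exact ((hp.mul hinv).mul_const _).mul hexp

theorem Z3_Tm {μ : ℝ} (hμ : 0 < μ) {a : (Fin 2 → ℝ) → ℝ} (ha : ∀ y, 1 ≤ a y)
    (c : (Fin 2 → ℝ) → ℝ) (e : ℝ) (p r q : ℕ) {s : ℝ} (hs : 0 < s) (y : Fin 2 → ℝ)
    {z : ℝ} (hz : 0 < z) :
    Z3op (Tm μ a c e p r q s) y z =
      Tm μ a (fun y => (p : ℝ) * c y) e p (r + 1) q s y z +
      Tm μ a (fun y => -(r : ℝ) * c y) e (p + 1) (r + 2) q s y z +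
      Tm μ a (fun y => -(1 / (2 * μ)) * c y) (e - 1) (p + 2) (r + 1) (q + 2) s y z := by
  have hA : 0 < a y := lt_of_lt_of_le zero_lt_one (ha y)
  have hw : (0:ℝ) < 1 + z := by linarith
  have hu : 0 < Real.sqrt s := Real.sqrt_pos.2 hs
  have hu2 : Real.sqrt s ^ 2 = s := Real.sq_sqrt hs.le
  have hre : a y ^ (e - 1) = a y ^ e / a y := by
    rw [Real.rpow_sub hA, Real.rpow_one]
  have hD : 4 * μ * a y * s ≠ 0 := by positivity
  rw [Z3op, (Tm_hasDerivAt μ a c e p r q y hz).deriv]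
  simp only [Tm, hre]
  rw [pow_add (Real.sqrt s) q 2, hu2]
  rcases p with _ | p <;> rcases r with _ | r <;>
    · push_cast
      field_simp
      ring

theorem Tm_Dy {μ : ℝ} (hμ : 0 < μ) {a : (Fin 2 → ℝ) → ℝ} (ha : ∀ y, 1 ≤ a y)
    (haD : Differentiable ℝ a) {c : (Fin 2 → ℝ) → ℝ} (hcD : Differentiable ℝ c)
    (e : ℝ) (p r q : ℕ) (i : Fin 2) {s : ℝ} (hs : 0 < s) (y : Fin 2 → ℝ) {z : ℝ} (hz : 0 < z) :
    Dy i (Tm μ a c e p r q s) y z =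
      Tm μ a (fun y => fderiv ℝ c y (Pi.single i 1)) e p r q s y z +
      Tm μ a (fun y => e * (c y * fderiv ℝ a y (Pi.single i 1))) (e - 1) p r q s y z +
      Tm μ a (fun y => 1 / (4 * μ) * (c y * fderiv ℝ a y (Pi.single i 1))) (e - 2) (p + 2) r
        (q + 2) s y z := by
  have hA : 0 < a y := lt_of_lt_of_le zero_lt_one (ha y)
  have hu : 0 < Real.sqrt s := Real.sqrt_pos.2 hs
  have hu2 : Real.sqrt s ^ 2 = s := Real.sq_sqrt hs.le
  have hre : a y ^ (e - 1) = a y ^ e / a y := by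
    rw [Real.rpow_sub hA, Real.rpow_one]
  have hre2 : a y ^ (e - 2) = a y ^ e / (a y * a y) := by
    rw [show e - 2 = e - 1 - 1 by ring, Real.rpow_sub hA, Real.rpow_sub hA, Real.rpow_one]
    ring
  have hfc := (hcD y).hasFDerivAt
  have hfa := (haD y).hasFDerivAt
  have hrp := hfa.rpow_const (p := e) (Or.inl (ne_of_gt hA))
  have hden : HasFDerivAt (fun y' => 4 * μ * a y' * s) (s • ((4 * μ) • fderiv ℝ a y)) y :=
    (hfa.const_mul (4 * μ)).mul_const s
  have hden0 : 4 * μ * a y * s ≠ 0 := by positivity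
  have hinv : HasFDerivAt (fun y' => (4 * μ * a y' * s)⁻¹)
      ((-((4 * μ * a y * s) ^ 2)⁻¹) • (s • ((4 * μ) • fderiv ℝ a y))) y :=
    (hasDerivAt_inv hden0).comp_hasFDerivAt y hden
  have hinner := hinv.const_mul (-(z ^ 2))
  have hexp := hinner.exp
  have H := ((((hfc.mul hrp).mul_const ((z : ℝ) ^ p)).mul_const
      (((1 + z) ^ r)⁻¹)).mul_const ((Real.sqrt s ^ q)⁻¹)).mul hexp
  simp only [Dy, Tm, div_eq_mul_inv]
  rw [(show HasFDerivAt (fun y' => c y' * a y' ^ e * z ^ p * ((1 + z) ^ r)⁻¹ *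
      (Real.sqrt s ^ q)⁻¹ * Real.exp (-(z ^ 2) * (4 * μ * a y' * s)⁻¹)) _ y from H).fderiv]
  simp only [ContinuousLinearMap.add_apply, ContinuousLinearMap.smul_apply,
    ContinuousLinearMap.coe_smul', ContinuousLinearMap.sub_apply, ContinuousLinearMap.zero_apply,
    Pi.smul_apply, smul_eq_mul, ContinuousLinearMap.coe_sub', Pi.sub_apply, Pi.mul_apply]
  rw [hre, hre2, pow_add (Real.sqrt s) q 2, hu2]
  have hμ0 : μ ≠ 0 := ne_of_gt hμ
  have hs0 : s ≠ 0 := ne_of_gt hs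
  have hA0 : a y ≠ 0 := ne_of_gt hA
  have hw0 : (1:ℝ) + z ≠ 0 := by linarith
  have hu0 : Real.sqrt s ≠ 0 := ne_of_gt hu
  field_simp [hw0, hu0]
  ring

/-! ### The representation class -/

inductive Rep (μ : ℝ) (a : (Fin 2 → ℝ) → ℝ) : ℕ → ℕ → (ℝ → (Fin 2 → ℝ) → ℝ → ℝ) → Prop
  | term {n m : ℕ} {c} (e : ℝ) (p r q : ℕ) (hc : Coef m c) (he : e ≤ 0) (hq2 : 2 ≤ q)
      (hpq : q - 2 ≤ p) (htr : p - (q - 2) ≤ r) (hdn : q - 2 ≤ n) :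
      Rep μ a n m (Tm μ a c e p r q)
  | zero {n m : ℕ} : Rep μ a n m (fun _ _ _ => 0)
  | add {n m : ℕ} {g₁ g₂} : Rep μ a n m g₁ → Rep μ a n m g₂ →
      Rep μ a n m (fun s y z => g₁ s y z + g₂ s y z)
  | ext {n m : ℕ} {g₁ g₂} : Rep μ a n m g₁ →
      (∀ s, 0 < s → ∀ y, ∀ z, 0 < z → g₁ s y z = g₂ s y z) → Rep μ a n m g₂

theorem Rep.diffZ {μ : ℝ} {a : (Fin 2 → ℝ) → ℝ} {n m : ℕ} {g}
    (h : Rep μ a n m g) : ∀ s, 0 < s → ∀ y, ∀ z, 0 < z → DifferentiableAt ℝ (g s y) z := by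
  induction h with
  | term e p r q hc he hq2 hpq htr hdn =>
      exact fun s hs y z hz => (Tm_hasDerivAt _ _ _ _ _ _ _ y hz).differentiableAt
  | zero => exact fun s hs y z hz => differentiableAt_const 0
  | add h₁ h₂ ih₁ ih₂ => exact fun s hs y z hz => (ih₁ s hs y z hz).add (ih₂ s hs y z hz)
  | ext h heq ih =>
      intro s hs y z hz
      refine (ih s hs y z hz).congr_of_eventuallyEq ?_
      filter_upwards [Ioi_mem_nhds hz] with w hw
      exact (heq s hs y w hw).symm

theorem Rep.diffY {μ : ℝ} {a : (Fin 2 → ℝ) → ℝ} {n m : ℕ} {g}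
    (hμ : 0 < μ) (ha : ∀ y, 1 ≤ a y) (haD : Differentiable ℝ a)
    (h : Rep μ a n m g) (hm : 1 ≤ m) :
    ∀ s, 0 < s → ∀ z, 0 < z → ∀ y, DifferentiableAt ℝ (fun y' => g s y' z) y := by
  induction h with
  | term e p r q hc he hq2 hpq htr hdn =>
      rename_i c
      intro s hs z hz y
      have hA : 0 < a y := lt_of_lt_of_le zero_lt_one (ha y)
      have hden0 : 4 * μ * a y * s ≠ 0 := by positivity
      have hcD : DifferentiableAt ℝ c y :=
        (hc.contDiff.differentiable (by exact_mod_cast (Nat.one_le_iff_ne_zero.mp hm))) y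
      have hinv : DifferentiableAt ℝ (fun y' => (4 * μ * a y' * s)⁻¹) y :=
        (differentiableAt_inv hden0).comp y (((haD y).const_mul (4 * μ)).mul_const s)
      have hexp : DifferentiableAt ℝ (fun y' => Real.exp (-(z ^ 2) * (4 * μ * a y' * s)⁻¹)) y :=
        (hinv.const_mul (-(z ^ 2))).exp
      have : DifferentiableAt ℝ (fun y' => c y' * a y' ^ e * z ^ p * ((1 + z) ^ r)⁻¹ *
          (Real.sqrt s ^ q)⁻¹ * Real.exp (-(z ^ 2) * (4 * μ * a y' * s)⁻¹)) y :=
        ((((hcD.mul ((haD y).rpow_const (Or.inl (ne_of_gt hA)))).mul_const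
          ((z : ℝ) ^ p)).mul_const (((1 + z) ^ r)⁻¹)).mul_const ((Real.sqrt s ^ q)⁻¹)).mul hexp
      exact this
  | zero => exact fun s hs z hz y => differentiableAt_const 0
  | add h₁ h₂ ih₁ ih₂ => exact fun s hs z hz y => (ih₁ s hs z hz y).add (ih₂ s hs z hz y)
  | ext h heq ih =>
      intro s hs z hz y
      refine (ih s hs z hz y).congr_of_eventuallyEq ?_
      filter_upwards with w
      exact (heq s hs w z hz).symm

theorem Rep.z3 {μ : ℝ} {a : (Fin 2 → ℝ) → ℝ} {n m : ℕ} {g}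
    (hμ : 0 < μ) (ha : ∀ y, 1 ≤ a y) (h : Rep μ a n m g) :
    Rep μ a (n + 2) m (fun s => Z3op (g s)) := by
  induction h with
  | term e p r q hc he hq2 hpq htr hdn =>
      rename_i c
      refine Rep.ext (Rep.add (Rep.add
        (Rep.term (c := fun y => (p : ℝ) * c y) e p (r + 1) q (hc.smul _) he hq2 hpq
          (by omega) (by omega))
        (Rep.term (c := fun y => -(r : ℝ) * c y) e (p + 1) (r + 2) q (hc.smul _) he hq2
          (by omega) (by omega) (by omega)))
        (Rep.term (c := fun y => -(1 / (2 * μ)) * c y) (e - 1) (p + 2) (r + 1) (q + 2)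
          (hc.smul _) (by linarith) (by omega) (by omega) (by omega) (by omega)))
        ?_
      intro s hs y z hz
      exact (Z3_Tm hμ ha c e p r q hs y hz).symm
  | zero =>
      refine Rep.ext Rep.zero ?_
      intro s hs y z hz
      simp [Z3op]
  | add h₁ h₂ ih₁ ih₂ =>
      refine Rep.ext (Rep.add ih₁ ih₂) ?_
      intro s hs y z hz
      simp only [Z3op]
      rw [deriv_fun_add (h₁.diffZ s hs y z hz) (h₂.diffZ s hs y z hz)]
      ring
  | ext h heq ih =>
      refine Rep.ext ih ?_
      intro s hs y z hz
      simp only [Z3op]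
      congr 1
      apply Filter.EventuallyEq.deriv_eq
      filter_upwards [Ioi_mem_nhds hz] with w hw
      exact heq s hs y w hw

theorem Rep.dy {μ : ℝ} {a : (Fin 2 → ℝ) → ℝ} {n m : ℕ} {g} (i : Fin 2)
    (hμ : 0 < μ) (ha : ∀ y, 1 ≤ a y)
    (h : Rep μ a n m g) :
    ∀ m', m = m' + 1 → Coef (m' + 1) a → Rep μ a (n + 2) m' (fun s => Dy i (g s)) := by
  induction h with
  | term e p r q hc he hq2 hpq htr hdn =>
      rename_i c
      rintro m' rfl haC
      have haD : Differentiable ℝ a := haC.differentiable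
      have hc' : Coef (m' + 1) c := hc
      have ha' : Coef (m' + 1) a := haC
      have hcD : Differentiable ℝ c := hc'.differentiable
      refine Rep.ext (Rep.add (Rep.add
        (Rep.term (c := fun y => fderiv ℝ c y (Pi.single i 1)) e p r q (hc'.pd i) he hq2 hpq
          htr (by omega))
        (Rep.term (c := fun y => e * (c y * fderiv ℝ a y (Pi.single i 1))) (e - 1) p r q
          (Coef.smul e ((hc'.of_le (Nat.le_succ _)).mul (ha'.pd i))) (by linarith) hq2 hpq
          htr (by omega)))
        (Rep.term (c := fun y => 1 / (4 * μ) * (c y * fderiv ℝ a y (Pi.single i 1)))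
          (e - 2) (p + 2) r (q + 2)
          (Coef.smul _ ((hc'.of_le (Nat.le_succ _)).mul (ha'.pd i))) (by linarith) (by omega)
          (by omega) (by omega) (by omega)))
        ?_
      intro s hs y z hz
      exact (Tm_Dy hμ ha haD hcD e p r q i hs y hz).symm
  | zero =>
      rintro m' rfl haC
      refine Rep.ext Rep.zero ?_
      intro s hs y z hz
      simp [Dy]
  | add h₁ h₂ ih₁ ih₂ =>
      rintro m' rfl haC
      have haD : Differentiable ℝ a := haC.differentiable
      refine Rep.ext (Rep.add (ih₁ m' rfl haC) (ih₂ m' rfl haC)) ?_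
      intro s hs y z hz
      simp only [Dy]
      rw [fderiv_fun_add (h₁.diffY hμ ha haD (Nat.le_add_left 1 m') s hs z hz y)
        (h₂.diffY hμ ha haD (Nat.le_add_left 1 m') s hs z hz y)]
      simp
  | ext h heq ih =>
      rintro m' rfl haC
      refine Rep.ext (ih m' rfl haC) ?_
      intro s hs y z hz
      simp only [Dy]
      rw [funext fun y' => heq s hs y' z hz]

theorem Rep.z3_iter {μ : ℝ} {a : (Fin 2 → ℝ) → ℝ} {n m : ℕ} {g}
    (hμ : 0 < μ) (ha : ∀ y, 1 ≤ a y) (k : ℕ) (h : Rep μ a n m g) :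
    Rep μ a (n + 2 * k) m (fun s => Z3op^[k] (g s)) := by
  induction k with
  | zero => simpa using h
  | succ k ih =>
      have H := ih.z3 hμ ha
      have e1 : (fun s => Z3op^[k + 1] (g s)) = fun s => Z3op (Z3op^[k] (g s)) :=
        funext fun s => Function.iterate_succ_apply' Z3op k (g s)
      rw [show n + 2 * (k + 1) = n + 2 * k + 2 from by ring, e1]
      exact H

theorem Rep.dy_iter {μ : ℝ} {a : (Fin 2 → ℝ) → ℝ} (i : Fin 2)
    (hμ : 0 < μ) (ha : ∀ y, 1 ≤ a y) (k : ℕ) {n m : ℕ} {g}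
    (h : Rep μ a n (m + k) g) (haC : Coef (m + k) a) :
    Rep μ a (n + 2 * k) m (fun s => (Dy i)^[k] (g s)) := by
  induction k generalizing n g with
  | zero => simpa using h
  | succ k ih =>
      have h1 : Rep μ a (n + 2) (m + k) (fun s => Dy i (g s)) :=
        h.dy i hμ ha (m + k) (by ring) (by
          have : m + k + 1 = m + (k + 1) := by ring
          rw [this]; exact haC)
      have H := ih h1 (haC.of_le (by omega))
      have e1 : (fun s => (Dy i)^[k + 1] (g s)) = fun s => (Dy i)^[k] (Dy i (g s)) :=
        funext fun s => Function.iterate_succ_apply (Dy i) k (g s)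
      rw [show n + 2 * (k + 1) = n + 2 + 2 * k from by ring, e1]
      exact H

theorem Rep.bound {μ : ℝ} {a : (Fin 2 → ℝ) → ℝ} {n m : ℕ} {g}
    (hμ : 0 < μ) (ha : ∀ y, 1 ≤ a y) (h : Rep μ a n m g) :
    ∃ C, 0 < C ∧ ∀ s, 0 < s → ∀ y, ∀ z, 0 < z →
      |g s y z| ≤ C * (∑ d ∈ Finset.range (n + 1), (z / Real.sqrt s) ^ d) *
        Real.exp (-(z ^ 2) / (4 * μ * a y * s)) * s⁻¹ := by
  induction h with
  | term e p r q hc he hq2 hpq htr hdn =>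
      rename_i c
      obtain ⟨M, hM0, hM⟩ := hc.abs_le
      refine ⟨M + 1, by linarith, fun s hs y z hz => ?_⟩
      have hA : 0 < a y := lt_of_lt_of_le zero_lt_one (ha y)
      have hu : 0 < Real.sqrt s := Real.sqrt_pos.2 hs
      have hu2 : Real.sqrt s ^ 2 = s := Real.sq_sqrt hs.le
      have hw : (0:ℝ) < 1 + z := by linarith
      have hEpos : 0 < Real.exp (-(z ^ 2) / (4 * μ * a y * s)) := Real.exp_pos _
      have key1 : z ^ p ≤ z ^ (q - 2) * (1 + z) ^ r := by
        have h1 : z ^ p = z ^ (q - 2) * z ^ (p - (q - 2)) := by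
          rw [← pow_add]; congr 1; omega
        rw [h1]
        refine mul_le_mul_of_nonneg_left ?_ (by positivity)
        calc z ^ (p - (q - 2)) ≤ (1 + z) ^ (p - (q - 2)) :=
              pow_le_pow_left₀ hz.le (by linarith) _
          _ ≤ (1 + z) ^ r := pow_le_pow_right₀ (by linarith) htr
      have hsum : (z / Real.sqrt s) ^ (q - 2) ≤
          ∑ d ∈ Finset.range (n + 1), (z / Real.sqrt s) ^ d :=
        Finset.single_le_sum (f := fun d => (z / Real.sqrt s) ^ d)
          (fun d _ => by positivity) (Finset.mem_range.2 (by omega))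
      have hqs : Real.sqrt s ^ q = Real.sqrt s ^ (q - 2) * s := by
        conv_lhs => rw [show q = (q - 2) + 2 from by omega]
        rw [pow_add, hu2]
      have hTm : |Tm μ a c e p r q s y z| = |c y| * a y ^ e * z ^ p * ((1 + z) ^ r)⁻¹ *
          (Real.sqrt s ^ q)⁻¹ * Real.exp (-(z ^ 2) / (4 * μ * a y * s)) := by
        simp only [Tm]
        rw [abs_mul, abs_mul, abs_mul, abs_mul, abs_mul,
          abs_of_nonneg (Real.rpow_nonneg hA.le e), abs_of_nonneg (pow_nonneg hz.le p),
          abs_of_nonneg (inv_nonneg.2 (pow_nonneg hw.le r)),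
          abs_of_nonneg (inv_nonneg.2 (pow_nonneg hu.le q)), abs_of_nonneg hEpos.le]
      rw [hTm]
      have hre1 : a y ^ e ≤ 1 := Real.rpow_le_one_of_one_le_of_nonpos (ha y) he
      calc |c y| * a y ^ e * z ^ p * ((1 + z) ^ r)⁻¹ * (Real.sqrt s ^ q)⁻¹ *
            Real.exp (-(z ^ 2) / (4 * μ * a y * s))
          ≤ M * 1 * (z ^ (q - 2) * (1 + z) ^ r) * ((1 + z) ^ r)⁻¹ * (Real.sqrt s ^ q)⁻¹ *
            Real.exp (-(z ^ 2) / (4 * μ * a y * s)) := by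
            gcongr
            exact hM y
        _ = M * ((z / Real.sqrt s) ^ (q - 2) * s⁻¹) *
            Real.exp (-(z ^ 2) / (4 * μ * a y * s)) := by
            rw [hqs, div_pow]
            field_simp
        _ ≤ (M + 1) * ((∑ d ∈ Finset.range (n + 1), (z / Real.sqrt s) ^ d) * s⁻¹) *
            Real.exp (-(z ^ 2) / (4 * μ * a y * s)) := by
            gcongr <;> first | linarith | exact hsum
        _ = (M + 1) * (∑ d ∈ Finset.range (n + 1), (z / Real.sqrt s) ^ d) *
            Real.exp (-(z ^ 2) / (4 * μ * a y * s)) * s⁻¹ := by ring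
  | zero =>
      refine ⟨1, one_pos, fun s hs y z hz => ?_⟩
      have : ∀ d ∈ Finset.range (n + 1), (0:ℝ) ≤ (z / Real.sqrt s) ^ d := fun d _ => by positivity
      simp only [abs_zero]
      have h1 : (0:ℝ) ≤ ∑ d ∈ Finset.range (n + 1), (z / Real.sqrt s) ^ d :=
        Finset.sum_nonneg this
      positivity
  | add h₁ h₂ ih₁ ih₂ =>
      obtain ⟨C₁, hC₁, hb₁⟩ := ih₁
      obtain ⟨C₂, hC₂, hb₂⟩ := ih₂
      refine ⟨C₁ + C₂, by linarith, fun s hs y z hz => ?_⟩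
      calc |_ + _| ≤ _ := abs_add_le _ _
        _ ≤ C₁ * (∑ d ∈ Finset.range (n + 1), (z / Real.sqrt s) ^ d) *
              Real.exp (-(z ^ 2) / (4 * μ * a y * s)) * s⁻¹ +
            C₂ * (∑ d ∈ Finset.range (n + 1), (z / Real.sqrt s) ^ d) *
              Real.exp (-(z ^ 2) / (4 * μ * a y * s)) * s⁻¹ :=
          add_le_add (hb₁ s hs y z hz) (hb₂ s hs y z hz)
        _ = (C₁ + C₂) * (∑ d ∈ Finset.range (n + 1), (z / Real.sqrt s) ^ d) *
              Real.exp (-(z ^ 2) / (4 * μ * a y * s)) * s⁻¹ := by ring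
  | ext h heq ih =>
      obtain ⟨C, hC, hb⟩ := ih
      exact ⟨C, hC, fun s hs y z hz => by rw [← heq s hs y z hz]; exact hb s hs y z hz⟩

theorem Khk_rep {μ : ℝ} (hμ : 0 < μ) {N : (Fin 2 → ℝ) → (Fin 3 → ℝ)}
    (ha : ∀ y, 1 ≤ nsq N y) (m : ℕ) :
    Rep μ (nsq N) 1 m (fun s => Khk μ N s) := by
  refine Rep.ext (Rep.term (c := fun _ => -(1/2) * (4 * Real.pi * μ) ^ (-(1:ℝ)/2))
    (-(1:ℝ)/2) 1 0 3 (Coef.const _ _) (by norm_num) (by norm_num) (by norm_num) (by norm_num)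
    (by norm_num)) ?_
  intro s hs y z hz
  have hA : 0 < nsq N y := lt_of_lt_of_le zero_lt_one (ha y)
  have hpi : 0 < Real.pi := Real.pi_pos
  have hu : 0 < Real.sqrt s := Real.sqrt_pos.2 hs
  have hu2 : Real.sqrt s ^ 2 = s := Real.sq_sqrt hs.le
  have hD : 4 * μ * nsq N y * s ≠ 0 := by positivity
  have hder : deriv (fun w => Real.exp (-(w ^ 2) / (4 * μ * nsq N y * s))) z =
      Real.exp (-(z ^ 2) / (4 * μ * nsq N y * s)) * (-(2 * z) / (4 * μ * nsq N y * s)) := by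
    have h1 : HasDerivAt (fun w : ℝ => -(w ^ 2) / (4 * μ * nsq N y * s))
        (-(2 * z) / (4 * μ * nsq N y * s)) z := by
      have h := ((hasDerivAt_pow 2 z).neg.div_const (4 * μ * nsq N y * s))
      norm_num at h
      exact h
    exact h1.exp.deriv
  have hsplit : (4 * Real.pi * μ * nsq N y * s) ^ (-(1:ℝ)/2) =
      (4 * Real.pi * μ) ^ (-(1:ℝ)/2) * nsq N y ^ (-(1:ℝ)/2) * s ^ (-(1:ℝ)/2) := by
    rw [Real.mul_rpow (by positivity) hs.le, Real.mul_rpow (by positivity) hA.le]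
  have hs12 : s ^ (-(1:ℝ)/2) = (Real.sqrt s)⁻¹ := by
    rw [show (-(1:ℝ)/2) = -(1/2) by ring, Real.rpow_neg hs.le, Real.sqrt_eq_rpow]
  have h3 : Real.sqrt s ^ 3 = s * Real.sqrt s := by
    rw [pow_succ, hu2]
  simp only [Tm, Khk, hder, hsplit, hs12, h3]
  field_simp
  ring

theorem nsq_eq (φ : (Fin 2 → ℝ) → ℝ) (y : Fin 2 → ℝ) :
    nsq (Nphi φ) y = pd2 0 φ y * pd2 0 φ y + pd2 1 φ y * pd2 1 φ y + 1 := by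
  simp [nsq, Nphi, Fin.sum_univ_three]
  ring

theorem one_le_nsq (φ : (Fin 2 → ℝ) → ℝ) (y : Fin 2 → ℝ) : 1 ≤ nsq (Nphi φ) y := by
  rw [nsq_eq]
  nlinarith [mul_self_nonneg (pd2 0 φ y), mul_self_nonneg (pd2 1 φ y)]

theorem coef_nsq (m : ℕ) {φ : (Fin 2 → ℝ) → ℝ} (hφ : ContDiff ℝ ((m + 1 : ℕ) : ℕ) φ)
    (B : ℝ) (hB : ∀ k ≤ m + 1, ∀ y, ‖iteratedFDeriv ℝ k φ y‖ ≤ B) :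
    Coef m (nsq (Nphi φ)) := by
  have hφc : Coef (m + 1) φ := ⟨hφ, B, hB⟩
  have h0 : Coef m (pd2 0 φ) := hφc.pd 0
  have h1 : Coef m (pd2 1 φ) := hφc.pd 1
  have heq : nsq (Nphi φ) = fun y =>
      (pd2 0 φ y * pd2 0 φ y + pd2 1 φ y * pd2 1 φ y) + 1 := by
    funext y
    rw [nsq_eq]
  rw [heq]
  exact ((h0.mul h0).add (h1.mul h1)).add (Coef.const m 1)

theorem poly_facts (D : ℕ) :
    (∑ i ∈ Finset.range (D + 1), (Polynomial.X : Polynomial ℝ) ^ i).natDegree = D ∧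
    ∀ x : ℝ, (∑ i ∈ Finset.range (D + 1), (Polynomial.X : Polynomial ℝ) ^ i).eval x =
      ∑ i ∈ Finset.range (D + 1), x ^ i := by
  constructor
  · refine le_antisymm ?_ ?_
    · refine Polynomial.natDegree_sum_le_of_forall_le _ _ fun i hi => ?_
      rw [Polynomial.natDegree_X_pow]
      exact Nat.lt_succ_iff.1 (Finset.mem_range.1 hi)
    · refine Polynomial.le_natDegree_of_ne_zero ?_
      rw [Polynomial.finset_sum_coeff]
      have : ∀ i ∈ Finset.range (D + 1), ((Polynomial.X : Polynomial ℝ) ^ i).coeff D =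
          if i = D then 1 else 0 := by
        intro i _
        rw [Polynomial.coeff_X_pow]
        simp [eq_comm]
      rw [Finset.sum_congr rfl this, Finset.sum_ite_eq' (Finset.range (D + 1)) D (fun _ => (1:ℝ))]
      simp
  · intro x
    rw [Polynomial.eval_finset_sum]
    simp

end Stmt7Aux

/-- Pointwise conormal bound on the heat kernel: for every multi-index `β` there is a
polynomial `P` of degree `2|β|+1` and a constant `C` (depending on `β`, `μ̃` and the
`C^{|β|+1}` norm of `∇φ`) with
`|Z^β K(s,y,z)| ≤ C |P(z/√s)| e^{−z²/(4 μ̃ |N|² s)} s^{−1}` for all `s > 0`, `z > 0`, `y`. -/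
theorem stmt7 (μ : ℝ) (hμ : 0 < μ) (β : ℕ × ℕ × ℕ)
    (φ : (Fin 2 → ℝ) → ℝ)
    (hφ : ContDiff ℝ ((β.1 + β.2.1 + β.2.2 + 2 : ℕ) : ℕ∞) φ)
    (B : ℝ)
    (hB : ∀ n ≤ β.1 + β.2.1 + β.2.2 + 2, ∀ y, ‖iteratedFDeriv ℝ n φ y‖ ≤ B) :
    ∃ (P : Polynomial ℝ) (C : ℝ), 0 < C ∧
      P.natDegree = 2 * (β.1 + β.2.1 + β.2.2) + 1 ∧
      ∀ s > 0, ∀ y : Fin 2 → ℝ, ∀ z > 0,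
        |Zbeta β (Khk μ (Nphi φ) s) y z|
          ≤ C * |P.eval (z / Real.sqrt s)| *
              Real.exp (-(z ^ 2) / (4 * μ * nsq (Nphi φ) y * s)) * s⁻¹ := by
  classical
  obtain ⟨β₁, β₂, β₃⟩ := β
  simp only at hφ hB ⊢
  set a := nsq (Nphi φ) with ha_def
  have ha1 : ∀ y, 1 ≤ a y := Stmt7Aux.one_le_nsq φ
  have haC : Stmt7Aux.Coef (β₁ + β₂) a := by
    refine Stmt7Aux.coef_nsq _ (hφ.of_le ?_) B (fun k hk y => hB k (by omega) y)
    exact_mod_cast (by omega : β₁ + β₂ + 1 ≤ β₁ + β₂ + β₃ + 2)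
  have h0 : Stmt7Aux.Rep μ a 1 (β₁ + β₂) (fun s => Khk μ (Nphi φ) s) :=
    Stmt7Aux.Khk_rep hμ ha1 _
  have h1 : Stmt7Aux.Rep μ a (1 + 2 * β₃) (β₁ + β₂)
      (fun s => Z3op^[β₃] (Khk μ (Nphi φ) s)) := h0.z3_iter hμ ha1 β₃
  have h2 : Stmt7Aux.Rep μ a (1 + 2 * β₃ + 2 * β₂) β₁
      (fun s => (Dy 1)^[β₂] (Z3op^[β₃] (Khk μ (Nphi φ) s))) :=
    Stmt7Aux.Rep.dy_iter 1 hμ ha1 β₂ h1 haC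
  have h2' : Stmt7Aux.Rep μ a (1 + 2 * β₃ + 2 * β₂) (0 + β₁)
      (fun s => (Dy 1)^[β₂] (Z3op^[β₃] (Khk μ (Nphi φ) s))) := by
    rwa [Nat.zero_add]
  have h3 : Stmt7Aux.Rep μ a (1 + 2 * β₃ + 2 * β₂ + 2 * β₁) 0
      (fun s => (Dy 0)^[β₁] ((Dy 1)^[β₂] (Z3op^[β₃] (Khk μ (Nphi φ) s)))) :=
    Stmt7Aux.Rep.dy_iter 0 hμ ha1 β₁ h2' (haC.of_le (by omega))
  have h4 : Stmt7Aux.Rep μ a (2 * (β₁ + β₂ + β₃) + 1) 0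
      (fun s => Zbeta (β₁, β₂, β₃) (Khk μ (Nphi φ) s)) := by
    have e1 : 1 + 2 * β₃ + 2 * β₂ + 2 * β₁ = 2 * (β₁ + β₂ + β₃) + 1 := by ring
    rw [← e1]
    exact h3
  obtain ⟨C, hC, hb⟩ := h4.bound hμ ha1
  set D := 2 * (β₁ + β₂ + β₃) + 1 with hD
  obtain ⟨hdeg, heval⟩ := Stmt7Aux.poly_facts D
  refine ⟨∑ i ∈ Finset.range (D + 1), (Polynomial.X : Polynomial ℝ) ^ i, C, hC, hdeg,
    fun s hs y z hz => ?_⟩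
  have hx : 0 < z / Real.sqrt s := div_pos hz (Real.sqrt_pos.2 hs)
  have habs : |(∑ i ∈ Finset.range (D + 1), (Polynomial.X : Polynomial ℝ) ^ i).eval
      (z / Real.sqrt s)| = ∑ i ∈ Finset.range (D + 1), (z / Real.sqrt s) ^ i := by
    rw [heval, abs_of_nonneg]
    exact Finset.sum_nonneg fun i _ => by positivity
  rw [habs]
  exact hb s hs y z hz
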